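/- The trace monoid T(P₄) = ⟨α, β, γ, δ ∣ αβ = βα, βγ = γβ, γδ = δγ⟩ (as a monoid presentation) embeds into the direct product M₂ × M₂ × M₂ of three copies of the free monoid M₂ = {x, y}* of rank 2; explicitly, the monoid homomorphism determined by α ↦ (x, y, 1), β ↦ (x, 1, x), γ ↦ (1, x, 1), δ ↦ (y, x, y) is injective. -/

import Mathlib

/-- The defining relations of the trace monoid `T(P₄)` on generators `α, β, γ, δ`
(numbered `0, 1, 2, 3`): consecutive generators commute. -/
def TP4rel : FreeMonoid (Fin 4) → FreeMonoid (Fin 4) → Prop := fun a b =>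
  (a = FreeMonoid.of 0 * FreeMonoid.of 1 ∧ b = FreeMonoid.of 1 * FreeMonoid.of 0) ∨
  (a = FreeMonoid.of 1 * FreeMonoid.of 2 ∧ b = FreeMonoid.of 2 * FreeMonoid.of 1) ∨
  (a = FreeMonoid.of 2 * FreeMonoid.of 3 ∧ b = FreeMonoid.of 3 * FreeMonoid.of 2)

/-- The trace monoid on the path with four vertices. -/
abbrev TP4 : Type := PresentedMonoid TP4rel

namespace TraceP4

def g1 : Fin 4 → List Bool := ![[true], [true], [], [false]]
def g2 : Fin 4 → List Bool := ![[false], [], [true], [true]]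
def g3 : Fin 4 → List Bool := ![[], [true], [], [false]]

def m (l : List (Fin 4)) : TP4 := PresentedMonoid.mk TP4rel (FreeMonoid.ofList l)

lemma m_nil : m [] = 1 := rfl
lemma m_cons (a : Fin 4) (l : List (Fin 4)) :
    m (a :: l) = PresentedMonoid.of TP4rel a * m l := rfl
lemma m_append (p q : List (Fin 4)) : m (p ++ q) = m p * m q := rfl

lemma mk_rel {x y : FreeMonoid (Fin 4)} (h : TP4rel x y) :
    PresentedMonoid.mk TP4rel x = PresentedMonoid.mk TP4rel y :=
  Quotient.sound (ConGen.Rel.of _ _ h)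

lemma comm01 : PresentedMonoid.of TP4rel 0 * PresentedMonoid.of TP4rel 1
    = PresentedMonoid.of TP4rel 1 * PresentedMonoid.of TP4rel 0 :=
  mk_rel (Or.inl ⟨rfl, rfl⟩)

lemma comm12 : PresentedMonoid.of TP4rel 1 * PresentedMonoid.of TP4rel 2
    = PresentedMonoid.of TP4rel 2 * PresentedMonoid.of TP4rel 1 :=
  mk_rel (Or.inr (Or.inl ⟨rfl, rfl⟩))

lemma comm23 : PresentedMonoid.of TP4rel 2 * PresentedMonoid.of TP4rel 3
    = PresentedMonoid.of TP4rel 3 * PresentedMonoid.of TP4rel 2 :=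
  mk_rel (Or.inr (Or.inr ⟨rfl, rfl⟩))

end TraceP4

namespace TraceP4

lemma comm_m (c : Fin 4) (p : List (Fin 4))
    (h : ∀ d ∈ p, PresentedMonoid.of TP4rel c * PresentedMonoid.of TP4rel d
      = PresentedMonoid.of TP4rel d * PresentedMonoid.of TP4rel c) :
    PresentedMonoid.of TP4rel c * m p = m p * PresentedMonoid.of TP4rel c := by
  induction p with
  | nil => rw [m_nil, mul_one, one_mul]
  | cons d p ih =>
    rw [m_cons, ← mul_assoc, h d List.mem_cons_self, mul_assoc,
      ih (fun e he => h e (List.mem_cons_of_mem _ he)), mul_assoc]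

lemma extract (g : Fin 4 → List Bool) (b0 : Bool) (c : Fin 4)
    (hg : ∀ d, g d = [] ∨ ∃ b, g d = [b])
    (hc : ∀ d, g d = [b0] → d = c) :
    ∀ (v : List (Fin 4)) (t : List Bool), v.flatMap g = b0 :: t →
      ∃ p q, v = p ++ c :: q ∧ ∀ d ∈ p, g d = [] := by
  intro v
  induction v with
  | nil => intro t h; simp at h
  | cons d v ih =>
    intro t h
    rw [List.flatMap_cons] at h
    rcases hg d with h0 | ⟨b, hb⟩
    · rw [h0, List.nil_append] at h
      obtain ⟨p, q, hpq, hp⟩ := ih t h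
      exact ⟨d :: p, q, by rw [hpq]; rfl, fun e he => by
        rcases List.mem_cons.mp he with h' | h'
        · rw [h']; exact h0
        · exact hp e h'⟩
    · rw [hb, List.cons_append] at h
      have hb0 : b = b0 := (List.cons.inj h).1
      exact ⟨[], v, by rw [hc d (hb0 ▸ hb)]; rfl, by simp⟩

lemma len_eq : ∀ l : List (Fin 4),
    l.length = (l.flatMap g2).length + (l.flatMap g3).count true := by
  intro l
  induction l with
  | nil => simp
  | cons d l ih =>
    rw [List.flatMap_cons, List.flatMap_cons, List.length_cons, List.length_append,
      List.count_append, ih]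
    fin_cases d <;> simp [g2, g3] <;> ring

end TraceP4

namespace TraceP4

def E (u v : List (Fin 4)) : Prop :=
  u.flatMap g1 = v.flatMap g1 ∧ u.flatMap g2 = v.flatMap g2 ∧ u.flatMap g3 = v.flatMap g3

lemma E_cancel {c : Fin 4} {u v : List (Fin 4)} (h : E (c :: u) (c :: v)) : E u v := by
  obtain ⟨h1, h2, h3⟩ := h
  rw [List.flatMap_cons, List.flatMap_cons] at h1 h2 h3
  exact ⟨List.append_cancel_left h1, List.append_cancel_left h2, List.append_cancel_left h3⟩

lemma E_nil {v : List (Fin 4)} (h : E [] v) : v = [] := by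
  obtain ⟨h1, h2, -⟩ := h
  cases v with
  | nil => rfl
  | cons d v =>
    exfalso
    rw [List.flatMap_nil, List.flatMap_cons] at h1 h2
    fin_cases d <;> simp [g1, g2] at h1 h2

lemma E_symm {u v : List (Fin 4)} (h : E u v) : E v u := ⟨h.1.symm, h.2.1.symm, h.2.2.symm⟩

lemma E_trans {u v w : List (Fin 4)} (h : E u v) (h' : E v w) : E u w :=
  ⟨h.1.trans h'.1, h.2.1.trans h'.2.1, h.2.2.trans h'.2.2⟩

lemma E_len {u v : List (Fin 4)} (h : E u v) : u.length = v.length := by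
  rw [len_eq u, len_eq v, h.2.1, h.2.2]

section Psi

variable (ψ : TP4 →* FreeMonoid Bool × FreeMonoid Bool × FreeMonoid Bool)
    (hα : ψ (PresentedMonoid.of TP4rel 0) = (FreeMonoid.of true, FreeMonoid.of false, 1))
    (hβ : ψ (PresentedMonoid.of TP4rel 1) = (FreeMonoid.of true, 1, FreeMonoid.of true))
    (hγ : ψ (PresentedMonoid.of TP4rel 2) = (1, FreeMonoid.of true, 1))
    (hδ : ψ (PresentedMonoid.of TP4rel 3) =
      (FreeMonoid.of false, FreeMonoid.of true, FreeMonoid.of false))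

include hα hβ hγ hδ in
lemma psi_m : ∀ l : List (Fin 4), ψ (m l) =
    (FreeMonoid.ofList (l.flatMap g1), FreeMonoid.ofList (l.flatMap g2),
      FreeMonoid.ofList (l.flatMap g3)) := by
  intro l
  induction l with
  | nil => rw [m_nil, map_one]; rfl
  | cons a l ih =>
    have key : ψ (PresentedMonoid.of TP4rel a) =
        (FreeMonoid.ofList (g1 a), FreeMonoid.ofList (g2 a), FreeMonoid.ofList (g3 a)) := by
      fin_cases a
      · exact hα
      · exact hβ
      · exact hγ
      · exact hδ
    rw [m_cons, map_mul, ih, key]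
    rfl

include hα hβ hγ hδ in
lemma psi_eq_iff {u v : List (Fin 4)} : ψ (m u) = ψ (m v) ↔ E u v := by
  rw [psi_m ψ hα hβ hγ hδ, psi_m ψ hα hβ hγ hδ]
  constructor
  · intro h
    refine ⟨?_, ?_, ?_⟩
    · have := congrArg (fun p => FreeMonoid.toList p.1) h; simpa using this
    · have := congrArg (fun p => FreeMonoid.toList p.2.1) h; simpa using this
    · have := congrArg (fun p => FreeMonoid.toList p.2.2) h; simpa using this
  · intro ⟨h1, h2, h3⟩; rw [h1, h2, h3]

include hα hβ hγ hδ in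
lemma step (c : Fin 4) (g : Fin 4 → List Bool) (b0 : Bool)
    (hgc : g c = [b0])
    (hsmall : ∀ d, g d = [] ∨ ∃ b, g d = [b])
    (huniq : ∀ d, g d = [b0] → d = c)
    (hcomm : ∀ d, g d = [] → PresentedMonoid.of TP4rel c * PresentedMonoid.of TP4rel d
      = PresentedMonoid.of TP4rel d * PresentedMonoid.of TP4rel c)
    (hsel : ∀ u v : List (Fin 4), E u v → u.flatMap g = v.flatMap g)
    {n : ℕ} (IH : ∀ u v : List (Fin 4), u.length ≤ n → E u v → m u = m v)
    (w x₁ : List (Fin 4)) (hw : w.length ≤ n + 1) (hE : E w (c :: x₁)) :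
    m w = m (c :: x₁) := by
  have hflat : w.flatMap g = b0 :: x₁.flatMap g := by
    rw [hsel w _ hE, List.flatMap_cons, hgc]; rfl
  obtain ⟨p, q, rfl, hp⟩ := extract g b0 c hsmall huniq w _ hflat
  have hcomm' : PresentedMonoid.of TP4rel c * m p = m p * PresentedMonoid.of TP4rel c :=
    comm_m c p (fun d hd => hcomm d (hp d hd))
  have hmw : m (p ++ c :: q) = m (c :: (p ++ q)) := by
    rw [m_append, m_cons, m_cons, m_append, ← mul_assoc, ← hcomm', mul_assoc]
  have hE2 : E (c :: (p ++ q)) (c :: x₁) :=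
    E_trans (E_symm ((psi_eq_iff ψ hα hβ hγ hδ).mp (congrArg ψ hmw))) hE
  have hlen : (p ++ q).length ≤ n := by
    simp only [List.length_append, List.length_cons] at hw ⊢
    omega
  rw [hmw, m_cons, m_cons, IH (p ++ q) x₁ hlen (E_cancel hE2)]

include hα hβ hγ hδ in
lemma main : ∀ n (u v : List (Fin 4)), u.length ≤ n → E u v → m u = m v := by
  intro n
  induction n with
  | zero =>
    intro u v hu hE
    obtain rfl : u = [] := List.length_eq_zero_iff.mp (Nat.le_zero.mp hu)
    rw [E_nil hE]
  | succ n IH =>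
    have step0 := step ψ hα hβ hγ hδ 0 g2 false rfl (by decide) (by decide)
      (fun d hd => by
        fin_cases d
        · exact absurd hd (by decide)
        · exact comm01
        · exact absurd hd (by decide)
        · exact absurd hd (by decide))
      (fun u v h => h.2.1) IH
    have step1 := step ψ hα hβ hγ hδ 1 g3 true rfl (by decide) (by decide)
      (fun d hd => by
        fin_cases d
        · exact comm01.symm
        · exact absurd hd (by decide)
        · exact comm12
        · exact absurd hd (by decide))
      (fun u v h => h.2.2) IH
    have step3 := step ψ hα hβ hγ hδ 3 g1 false rfl (by decide) (by decide)
      (fun d hd => by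
        fin_cases d
        · exact absurd hd (by decide)
        · exact absurd hd (by decide)
        · exact comm23.symm
        · exact absurd hd (by decide))
      (fun u v h => h.1) IH
    intro u v hu hE
    match u, v with
    | [], v => rw [E_nil hE]
    | a :: u₁, [] => exact absurd (E_nil (E_symm hE)) (by simp)
    | a :: u₁, b :: v₁ =>
      have hvlen : (b :: v₁).length ≤ n + 1 := by rw [← E_len hE]; exact hu
      by_cases hab : a = b
      · subst hab
        rw [m_cons, m_cons,
          IH u₁ v₁ (by simpa using Nat.lt_succ_iff.mp (lt_of_lt_of_le (by simp) hu))
            (E_cancel hE)]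
      · rcases (by decide : ∀ x : Fin 4, x = 0 ∨ x = 1 ∨ x = 2 ∨ x = 3) b with
          rfl | rfl | rfl | rfl
        · exact step0 (a :: u₁) v₁ hu hE
        · exact step1 (a :: u₁) v₁ hu hE
        · rcases (by decide : ∀ x : Fin 4, x = 0 ∨ x = 1 ∨ x = 2 ∨ x = 3) a with
            rfl | rfl | rfl | rfl
          · exact (step0 (2 :: v₁) u₁ hvlen (E_symm hE)).symm
          · exact (step1 (2 :: v₁) u₁ hvlen (E_symm hE)).symm
          · exact absurd rfl hab
          · exact (step3 (2 :: v₁) u₁ hvlen (E_symm hE)).symm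
        · exact step3 (a :: u₁) v₁ hu hE

end Psi

end TraceP4

/-- The monoid homomorphism `T(P₄) → M₂ × M₂ × M₂` determined by `α ↦ (x, y, 1)`,
`β ↦ (x, 1, x)`, `γ ↦ (1, x, 1)`, `δ ↦ (y, x, y)` is injective, where `M₂` is the free
monoid on `{x, y}` (here `x = true`, `y = false`). -/
theorem traceMonoid_P4_embeds_M2_cube
    (ψ : TP4 →* FreeMonoid Bool × FreeMonoid Bool × FreeMonoid Bool)
    (hα : ψ (PresentedMonoid.of TP4rel 0) = (FreeMonoid.of true, FreeMonoid.of false, 1))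
    (hβ : ψ (PresentedMonoid.of TP4rel 1) = (FreeMonoid.of true, 1, FreeMonoid.of true))
    (hγ : ψ (PresentedMonoid.of TP4rel 2) = (1, FreeMonoid.of true, 1))
    (hδ : ψ (PresentedMonoid.of TP4rel 3) =
      (FreeMonoid.of false, FreeMonoid.of true, FreeMonoid.of false)) :
    Function.Injective ψ := by
  intro x y
  refine PresentedMonoid.inductionOn₂ (δ := fun x y => ψ x = ψ y → x = y) x y ?_
  intro a b h
  have ha : PresentedMonoid.mk TP4rel a = TraceP4.m (FreeMonoid.toList a) := rfl
  have hb : PresentedMonoid.mk TP4rel b = TraceP4.m (FreeMonoid.toList b) := rfl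
  rw [ha, hb] at h ⊢
  exact TraceP4.main ψ hα hβ hγ hδ (FreeMonoid.toList a).length _ _ le_rfl
    ((TraceP4.psi_eq_iff ψ hα hβ hγ hδ).mp h)
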